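/- Let (X,μ) be a measure space with μ(X) = 1 and let u : X → ℝ be measurable. Let 0 < q < 4, set j = 4/q > 1, and let K > 0. Suppose that for every real w ≥ 0 one has ‖u‖_{L^{4(1+w)}}^{1+w} ≤ (1+w) · K · ‖u‖_{L^{qw}}^{w} (where for w = 0 the factor ‖u‖_{L^{qw}}^{w} is interpreted as 1). Then for every 0 < m < ∞, with α ∈ (0,1] defined by 1/α = 1 + m(j−1)/4, there is a constant C depending only on q and m such that ‖u‖_{L^∞} ≤ C · K^α · ‖u‖_{L^m}^{1−α}. (This is the Moser-iteration core of the paper's Theorem 8.1, abstracted over a unit-volume measure space.) -/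

import Mathlib

open MeasureTheory ENNReal Filter

set_option maxHeartbeats 2000000 in
/-- Moser-iteration core of the paper's Theorem 8.1, abstracted over a
unit-volume measure space: if `0 < q < 4`, `j = 4/q`, `K > 0`, and for all
`w ≥ 0` one has `‖u‖_{4(1+w)}^{1+w} ≤ (1+w) K ‖u‖_{qw}^w` (with the `w = 0`
factor interpreted as `1`), then for `0 < m < ∞` and `α` with
`1/α = 1 + m (j-1)/4` there is `C = C(q,m)` with
`‖u‖_∞ ≤ C K^α ‖u‖_m^{1-α}`. -/
theorem moser_iteration_core
    (q m α : ℝ) (hq0 : 0 < q) (hq4 : q < 4) (hm : 0 < m)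
    (hα : 1 / α = 1 + m * (4 / q - 1) / 4) :
    ∃ C : ℝ, 0 < C ∧
      ∀ (X : Type) (_ : MeasurableSpace X) (μ : Measure X),
        μ Set.univ = 1 →
        ∀ u : X → ℝ, Measurable u →
        ∀ K : ℝ, 0 < K →
        (∀ w : ℝ, 0 ≤ w →
          ((∫⁻ x, (ENNReal.ofReal |u x|) ^ (4 * (1 + w)) ∂μ) ^ (1 / (4 * (1 + w)))) ^ (1 + w)
            ≤ ENNReal.ofReal ((1 + w) * K) *
              ((∫⁻ x, (ENNReal.ofReal |u x|) ^ (q * w) ∂μ) ^ (1 / (q * w))) ^ w) →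
        essSup (fun x => ENNReal.ofReal |u x|) μ ≤
          ENNReal.ofReal C * (ENNReal.ofReal K) ^ α *
            ((∫⁻ x, (ENNReal.ofReal |u x|) ^ m ∂μ) ^ (1 / m)) ^ (1 - α) := by
  have hq0' : q ≠ 0 := ne_of_gt hq0
  set j : ℝ := 4 / q with hjdef
  have hj1 : 1 < j := (one_lt_div hq0).mpr hq4
  have hj0 : (0:ℝ) < j := lt_trans one_pos hj1
  have hjm1 : (0:ℝ) < j - 1 := by linarith
  have hqj : q * j = 4 := by rw [hjdef]; field_simp
  set E : ℝ := 1 / (j - 1) with hEdef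
  have hE0 : 0 < E := by positivity
  have hEj : E * (j - 1) = 1 := by rw [hEdef]; field_simp
  set w0 : ℝ := m / q with hw0def
  have hw00 : 0 < w0 := div_pos hm hq0
  have hqw0 : q * w0 = m := by rw [hw0def]; field_simp
  set D : ℝ := 1 + w0 + E with hDdef
  have hD1 : 1 < D := by linarith
  have hD0 : 0 < D := by linarith
  set G : ℝ := D * j with hGdef
  have hG1 : 1 < G := by nlinarith
  have hG0 : 0 < G := lt_trans one_pos hG1
  set c2 : ℝ := (2 + E) * E with hc2def
  set A : ℝ := 1 + c2 with hAdef
  clear_value j E w0 D G c2 A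
  -- α identities
  have hR0 : 0 < 1 + m * (j - 1) / 4 := by nlinarith
  have hαval : α = 1 / (1 + m * (j - 1) / 4) := by rw [← hα, one_div_one_div]
  have hkey0 : (j - 1) * D = j * (1 + m * (j - 1) / 4) := by
    rw [hDdef, hEdef, hw0def]
    field_simp
    linear_combination (j*m*(1-j)) * hqj + (m*(j-1)) * hqj + (2*m - 3*j*m + j^2*m) * hqj
  have hα_eq : α = j / ((j - 1) * D) := by
    rw [hαval, hkey0, div_mul_cancel_left₀ (ne_of_gt hj0), inv_eq_one_div]
  have h1α : 1 - α = w0 / D := by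
    rw [hα_eq, hw0def]
    field_simp
    linear_combination (D*q)*hkey0 + (D*m*(j-1)/4)*hqj + (q - q*D)*hkey0 + (m*(j-1)/4 - D*m*(j-1)/4)*hqj
  have hα_pos : 0 < α := by rw [hα_eq]; positivity
  have h1α_pos : 0 < 1 - α := by rw [h1α]; positivity
  refine ⟨G ^ (A / D), Real.rpow_pos_of_pos hG0 _, ?_⟩
  intro X mX μ hμ u hu K hK hyp
  have hf : Measurable fun x => ENNReal.ofReal |u x| := hu.abs.ennreal_ofReal
  have hK0 : ENNReal.ofReal K ≠ 0 := (ENNReal.ofReal_pos.mpr hK).ne'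
  have hKtop : ENNReal.ofReal K ≠ ⊤ := ENNReal.ofReal_ne_top
  have hC0 : (0:ℝ) < G ^ (A / D) := Real.rpow_pos_of_pos hG0 _
  -- trivial cases on ∫ f^m
  rcases eq_top_or_lt_top (∫⁻ x, (ENNReal.ofReal |u x|) ^ m ∂μ) with Itop | Ifin
  · rw [Itop]
    have h1 : ((⊤ : ℝ≥0∞) ^ (1/m)) ^ (1 - α) = ⊤ := by
      rw [ENNReal.top_rpow_of_pos (by positivity), ENNReal.top_rpow_of_pos h1α_pos]
    rw [h1, ENNReal.mul_top (mul_ne_zero (ENNReal.ofReal_pos.mpr hC0).ne'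
      (by simp [ENNReal.rpow_eq_zero_iff, hK0, hKtop]))]
    exact le_top
  rcases eq_or_ne (∫⁻ x, (ENNReal.ofReal |u x|) ^ m ∂μ) 0 with I0 | Ipos
  · have hae : (fun x => ENNReal.ofReal |u x|) =ᵐ[μ] 0 := by
      have h := (lintegral_eq_zero_iff (hf.pow_const m)).mp I0
      filter_upwards [h] with x hx
      have hx' : ENNReal.ofReal |u x| ^ m = 0 := hx
      rcases ENNReal.rpow_eq_zero_iff.mp hx' with ⟨h, _⟩ | ⟨_, h⟩
      · simpa using h
      · linarith
    refine le_trans (essSup_le_of_ae_le 0 ?_) (zero_le)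
    filter_upwards [hae] with x hx using le_of_eq hx
  -- main case
  have Ifin' := Ifin.ne
  set Mh : ℝ≥0∞ := (∫⁻ x, (ENNReal.ofReal |u x|) ^ m ∂μ) ^ (1/m) with hMdef
  have hMh0 : Mh ≠ 0 := by
    rw [hMdef, Ne, ENNReal.rpow_eq_zero_iff]
    push_neg
    refine ⟨fun h => absurd h Ipos, fun h => absurd h Ifin'⟩
  have hMhtop : Mh ≠ ⊤ := by
    rw [hMdef, Ne, ENNReal.rpow_eq_top_iff]
    push_neg
    refine ⟨fun h => absurd h Ipos, fun h => absurd h Ifin'⟩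
  set Mr : ℝ := Mh.toReal with hMrdef
  have hMr0 : 0 < Mr := ENNReal.toReal_pos hMh0 hMhtop
  have hMr : Mh = ENNReal.ofReal Mr := (ENNReal.ofReal_toReal hMhtop).symm
  clear_value Mh Mr
  -- the iteration exponents
  set V : ℕ → ℝ := fun n => D * j ^ n - E with hVdef
  clear_value V
  have hjn1 : ∀ n : ℕ, 1 ≤ j ^ n := fun n => one_le_pow₀ hj1.le
  have hV1 : ∀ n, 1 + w0 ≤ V n := by
    intro n
    have h := hjn1 n
    simp only [hVdef]
    nlinarith
  have hVpos : ∀ n, 0 < V n := fun n => lt_of_lt_of_le (by linarith) (hV1 n)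
  have hV1' : ∀ n, 1 < V n := fun n => lt_of_lt_of_le (by linarith) (hV1 n)
  have hV0 : V 0 = 1 + w0 := by simp only [hVdef, pow_zero, mul_one, hDdef]; ring
  have hVrec : ∀ n, V (n + 1) = 1 + j * V n := by
    intro n
    simp only [hVdef, pow_succ]
    linear_combination hEj
  have hGh0 : ENNReal.ofReal G ≠ 0 := (ENNReal.ofReal_pos.mpr hG0).ne'
  have hGhtop : ENNReal.ofReal G ≠ ⊤ := ENNReal.ofReal_ne_top
  have hGh1 : 1 ≤ ENNReal.ofReal G := by
    rw [← ENNReal.ofReal_one]; exact ENNReal.ofReal_le_ofReal hG1.le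
  -- the key iteration bound
  have key : ∀ n : ℕ,
      ((∫⁻ x, (ENNReal.ofReal |u x|) ^ (4 * V n) ∂μ) ^ (1 / (4 * V n))) ^ (V n)
        ≤ ENNReal.ofReal G ^ (A * j ^ n - E * n - c2) *
            ENNReal.ofReal K ^ ((j ^ (n+1) - 1) / (j - 1)) * Mh ^ (w0 * j ^ n) := by
    intro n
    induction n with
    | zero =>
      have h0 := hyp w0 hw00.le
      rw [hqw0, ← hMdef] at h0
      rw [hV0]
      simp only [pow_zero, zero_add, pow_one, mul_one, Nat.cast_zero, mul_zero, sub_zero]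
      have e1 : A - c2 = 1 := by rw [hAdef]; ring
      have e2 : (j - 1) / (j - 1) = 1 := div_self (ne_of_gt hjm1)
      rw [e1, e2, ENNReal.rpow_one, ENNReal.rpow_one]
      refine le_trans h0 ?_
      rw [ENNReal.ofReal_mul (by linarith)]
      refine mul_le_mul' (mul_le_mul' (ENNReal.ofReal_le_ofReal ?_) le_rfl) le_rfl
      rw [hGdef]; nlinarith
    | succ n ih =>
      have hw : 0 ≤ j * V n := (mul_pos hj0 (hVpos n)).le
      have h0 := hyp (j * V n) hw
      rw [show 1 + j * V n = V (n + 1) from (hVrec n).symm] at h0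
      rw [show q * (j * V n) = 4 * V n by rw [← hqj]; ring] at h0
      refine le_trans h0 ?_
      have hBn : ((∫⁻ x, (ENNReal.ofReal |u x|) ^ (4 * V n) ∂μ) ^ (1 / (4 * V n))) ^ (j * V n)
          = (((∫⁻ x, (ENNReal.ofReal |u x|) ^ (4 * V n) ∂μ) ^ (1 / (4 * V n))) ^ (V n)) ^ j := by
        simp only [← ENNReal.rpow_mul]
        congr 1
        ring
      rw [hBn]
      calc ENNReal.ofReal (V (n+1) * K) *
            ((((∫⁻ x, (ENNReal.ofReal |u x|) ^ (4 * V n) ∂μ) ^ (1 / (4 * V n))) ^ (V n)) ^ j)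
          ≤ (ENNReal.ofReal (V (n+1)) * ENNReal.ofReal K) *
            ((ENNReal.ofReal G ^ (A * j ^ n - E * n - c2) *
              ENNReal.ofReal K ^ ((j ^ (n+1) - 1) / (j - 1)) * Mh ^ (w0 * j ^ n)) ^ j) := by
            rw [ENNReal.ofReal_mul (hVpos (n+1)).le]
            exact mul_le_mul' le_rfl (ENNReal.rpow_le_rpow ih hj0.le)
        _ ≤ (ENNReal.ofReal G ^ ((n : ℝ) + 2) * ENNReal.ofReal K) *
            ((ENNReal.ofReal G ^ (A * j ^ n - E * n - c2) *
              ENNReal.ofReal K ^ ((j ^ (n+1) - 1) / (j - 1)) * Mh ^ (w0 * j ^ n)) ^ j) := by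
            refine mul_le_mul' (mul_le_mul' ?_ le_rfl) le_rfl
            have hVle : V (n+1) ≤ G ^ ((n : ℝ) + 2) := by
              have hcast : G ^ ((n : ℝ) + 2) = G ^ (n + 2 : ℕ) := by
                rw [← Real.rpow_natCast G (n+2)]; congr 1; push_cast; ring
              rw [hcast, hGdef, mul_pow]
              have h1 : V (n+1) ≤ D * j ^ (n+1) := by
                simp only [hVdef]; linarith
              have h2 : D * j ^ (n+1) ≤ D ^ (n+2) * j ^ (n+2) :=
                mul_le_mul (le_self_pow₀ hD1.le (by omega))
                  (pow_le_pow_right₀ hj1.le (by omega)) (by positivity) (by positivity)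
              linarith
            calc ENNReal.ofReal (V (n+1)) ≤ ENNReal.ofReal (G ^ ((n : ℝ) + 2)) :=
                  ENNReal.ofReal_le_ofReal hVle
              _ = ENNReal.ofReal G ^ ((n : ℝ) + 2) := (ENNReal.ofReal_rpow_of_pos hG0).symm
        _ = ENNReal.ofReal G ^ (((n : ℝ) + 2) + (A * j ^ n - E * n - c2) * j) *
            ENNReal.ofReal K ^ (1 + ((j ^ (n+1) - 1) / (j - 1)) * j) *
            Mh ^ ((w0 * j ^ n) * j) := by
            rw [ENNReal.mul_rpow_of_nonneg _ _ hj0.le, ENNReal.mul_rpow_of_nonneg _ _ hj0.le,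
              ← ENNReal.rpow_mul, ← ENNReal.rpow_mul, ← ENNReal.rpow_mul,
              ENNReal.rpow_add ((n : ℝ) + 2) ((A * j ^ n - E * n - c2) * j) hGh0 hGhtop,
              ENNReal.rpow_add 1 (((j ^ (n+1) - 1) / (j - 1)) * j) hK0 hKtop,
              ENNReal.rpow_one]
            ac_rfl
        _ ≤ ENNReal.ofReal G ^ (A * j ^ (n+1) - E * (n+1 : ℕ) - c2) *
            ENNReal.ofReal K ^ ((j ^ (n+1+1) - 1) / (j - 1)) * Mh ^ (w0 * j ^ (n+1)) := by
            refine mul_le_mul' (mul_le_mul' ?_ (le_of_eq ?_)) (le_of_eq ?_)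
            · refine ENNReal.rpow_le_rpow_of_exponent_le hGh1 ?_
              push_cast
              have : ((n : ℝ) + 2) + (A * j ^ n - E * n - c2) * j
                  = A * j ^ (n+1) - E * ((n:ℝ)+1) - c2 := by
                rw [pow_succ]
                linear_combination (-(n:ℝ) - 2 - E) * hEj - (j - 1) * hc2def
              linarith [this]
            · congr 1
              rw [pow_succ j (n+1)]
              field_simp
              ring
            · congr 1
              rw [pow_succ]; ring
  -- pass to the limit to bound the essential sup
  by_contra hcon
  push_neg at hcon
  obtain ⟨c, hc1, hc2⟩ := exists_between hcon
  have hctop : c ≠ ⊤ := ne_top_of_lt hc2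
  set S : Set X := {x | c < ENNReal.ofReal |u x|} with hSdef
  have hS : MeasurableSet S := measurableSet_lt measurable_const hf
  have hs0 : μ S ≠ 0 := by
    intro h
    refine absurd hc2 (not_lt.mpr (essSup_le_of_ae_le c ?_))
    rw [EventuallyLE, ae_iff]
    simpa [hSdef, not_le] using h
  have hs1 : μ S ≤ 1 := by rw [← hμ]; exact measure_mono (Set.subset_univ S)
  have hstop : μ S ≠ ⊤ := (lt_of_le_of_lt hs1 ENNReal.one_lt_top).ne
  set sr : ℝ := (μ S).toReal with hsrdef
  have hsr0 : 0 < sr := ENNReal.toReal_pos hs0 hstop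
  have hsr : μ S = ENNReal.ofReal sr := (ENNReal.ofReal_toReal hstop).symm
  clear_value sr
  -- lower bound for the L^p norms
  have lower : ∀ n : ℕ, c * (μ S) ^ (1 / (4 * V n))
      ≤ (∫⁻ x, (ENNReal.ofReal |u x|) ^ (4 * V n) ∂μ) ^ (1 / (4 * V n)) := by
    intro n
    have hp : (0:ℝ) < 4 * V n := by have := hVpos n; linarith
    have hint : c ^ (4 * V n) * μ S ≤ ∫⁻ x, (ENNReal.ofReal |u x|) ^ (4 * V n) ∂μ := by
      calc c ^ (4 * V n) * μ S
          = ∫⁻ x, S.indicator (fun _ => c ^ (4 * V n)) x ∂μ := by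
            rw [lintegral_indicator hS, setLIntegral_const]
        _ ≤ ∫⁻ x, (ENNReal.ofReal |u x|) ^ (4 * V n) ∂μ := by
            refine lintegral_mono fun x => ?_
            by_cases hx : x ∈ S
            · rw [Set.indicator_of_mem hx]
              exact ENNReal.rpow_le_rpow (le_of_lt hx) hp.le
            · simp [Set.indicator_of_notMem hx]
    have := ENNReal.rpow_le_rpow hint (by positivity : (0:ℝ) ≤ 1 / (4 * V n))
    rwa [ENNReal.mul_rpow_of_nonneg _ _ (by positivity : (0:ℝ) ≤ 1 / (4 * V n)),
      ← ENNReal.rpow_mul, mul_one_div_cancel hp.ne', ENNReal.rpow_one] at this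
  -- per-n bound on c
  set t1 : ℕ → ℝ := fun n => (A * j ^ n - E * n - c2) / V n with ht1def
  set t2 : ℕ → ℝ := fun n => ((j ^ (n+1) - 1) / (j - 1)) / V n with ht2def
  set t3 : ℕ → ℝ := fun n => (w0 * j ^ n) / V n with ht3def
  set t4 : ℕ → ℝ := fun n => -(1 / (4 * V n)) with ht4def
  clear_value t1 t2 t3 t4
  have cr : ∀ n : ℕ, c ≤ ENNReal.ofReal
      (G ^ t1 n * K ^ t2 n * Mr ^ t3 n * sr ^ t4 n) := by
    intro n
    have hp : (0:ℝ) < 4 * V n := by have := hVpos n; linarith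
    have hsfin : μ S ≠ ⊤ := hstop
    have hcancel : (μ S) ^ (1 / (4 * V n)) * (μ S) ^ (-(1 / (4 * V n))) = 1 := by
      rw [← ENNReal.rpow_add _ _ hs0 hstop, add_neg_cancel, ENNReal.rpow_zero]
    have step1 : c ≤ ((∫⁻ x, (ENNReal.ofReal |u x|) ^ (4 * V n) ∂μ) ^ (1 / (4 * V n)))
        * (μ S) ^ (-(1 / (4 * V n))) := by
      calc c = c * ((μ S) ^ (1 / (4 * V n)) * (μ S) ^ (-(1 / (4 * V n)))) := by
            rw [hcancel, mul_one]
        _ = (c * (μ S) ^ (1 / (4 * V n))) * (μ S) ^ (-(1 / (4 * V n))) := by ring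
        _ ≤ _ := mul_le_mul' (lower n) le_rfl
    have step2 : (∫⁻ x, (ENNReal.ofReal |u x|) ^ (4 * V n) ∂μ) ^ (1 / (4 * V n))
        ≤ (ENNReal.ofReal G ^ (A * j ^ n - E * n - c2) *
            ENNReal.ofReal K ^ ((j ^ (n+1) - 1) / (j - 1)) * Mh ^ (w0 * j ^ n)) ^ (1 / V n) := by
      have h := ENNReal.rpow_le_rpow (key n) (one_div_pos.mpr (hVpos n)).le
      rwa [← ENNReal.rpow_mul, mul_one_div_cancel (hVpos n).ne', ENNReal.rpow_one] at h
    have step3 : (ENNReal.ofReal G ^ (A * j ^ n - E * n - c2) *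
            ENNReal.ofReal K ^ ((j ^ (n+1) - 1) / (j - 1)) * Mh ^ (w0 * j ^ n)) ^ (1 / V n)
          * (μ S) ^ (-(1 / (4 * V n)))
        = ENNReal.ofReal (G ^ t1 n * K ^ t2 n * Mr ^ t3 n * sr ^ t4 n) := by
      rw [ENNReal.mul_rpow_of_nonneg _ _ (one_div_pos.mpr (hVpos n)).le,
        ENNReal.mul_rpow_of_nonneg _ _ (one_div_pos.mpr (hVpos n)).le,
        ← ENNReal.rpow_mul, ← ENNReal.rpow_mul, ← ENNReal.rpow_mul,
        hMr, hsr,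
        ENNReal.ofReal_rpow_of_pos hG0, ENNReal.ofReal_rpow_of_pos hK,
        ENNReal.ofReal_rpow_of_pos hMr0, ENNReal.ofReal_rpow_of_pos hsr0,
        ← ENNReal.ofReal_mul (Real.rpow_pos_of_pos hG0 _).le,
        ← ENNReal.ofReal_mul (mul_pos (Real.rpow_pos_of_pos hG0 _)
            (Real.rpow_pos_of_pos hK _)).le,
        ← ENNReal.ofReal_mul (mul_pos (mul_pos (Real.rpow_pos_of_pos hG0 _)
            (Real.rpow_pos_of_pos hK _)) (Real.rpow_pos_of_pos hMr0 _)).le]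
      simp only [ht1def, ht2def, ht3def, ht4def, mul_one_div]
    calc c ≤ _ := step1
      _ ≤ (ENNReal.ofReal G ^ (A * j ^ n - E * n - c2) *
            ENNReal.ofReal K ^ ((j ^ (n+1) - 1) / (j - 1)) * Mh ^ (w0 * j ^ n)) ^ (1 / V n)
          * (μ S) ^ (-(1 / (4 * V n))) := mul_le_mul' step2 le_rfl
      _ = _ := step3
  -- limits of the exponent sequences
  have hρ0 : (0:ℝ) ≤ j⁻¹ := inv_nonneg.mpr hj0.le
  have hρ1 : j⁻¹ < 1 := by rw [inv_lt_one_iff₀]; right; exact hj1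
  have hρn : Tendsto (fun n : ℕ => (j⁻¹) ^ n) atTop (nhds 0) :=
    tendsto_pow_atTop_nhds_zero_of_lt_one hρ0 hρ1
  have hnρn : Tendsto (fun n : ℕ => (n : ℝ) * (j⁻¹) ^ n) atTop (nhds 0) :=
    tendsto_self_mul_const_pow_of_lt_one hρ0 hρ1
  have hden : ∀ n : ℕ, D - E * (j⁻¹) ^ n ≠ 0 := by
    intro n
    have h1 : (j⁻¹) ^ n ≤ 1 := pow_le_one₀ hρ0 hρ1.le
    have h2 : E * (j⁻¹) ^ n ≤ E := by nlinarith
    have : 0 < D - E * (j⁻¹) ^ n := by rw [hDdef]; nlinarith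
    linarith
  have hdenlim : Tendsto (fun n : ℕ => D - E * (j⁻¹) ^ n) atTop (nhds D) := by
    have h2 := (tendsto_const_nhds : Tendsto (fun _ : ℕ => D) atTop (nhds D)).sub
      ((tendsto_const_nhds : Tendsto (fun _ : ℕ => E) atTop (nhds E)).mul hρn)
    simpa using h2
  have hVeq : ∀ n : ℕ, V n = (D - E * (j⁻¹) ^ n) * j ^ n := by
    intro n
    have hjn : (0:ℝ) < j ^ n := pow_pos hj0 n
    simp only [hVdef]
    simp only [inv_pow]
    field_simp
    try ring
  have ht1 : Tendsto t1 atTop (nhds (A / D)) := by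
    have heq : ∀ n : ℕ, t1 n = (A - E * ((n : ℝ) * (j⁻¹) ^ n) - c2 * (j⁻¹) ^ n)
        / (D - E * (j⁻¹) ^ n) := by
      intro n
      have hjn : (0:ℝ) < j ^ n := pow_pos hj0 n
      rw [ht1def]
      simp only
      rw [hVeq n, div_eq_div_iff (by rw [← hVeq n]; exact (hVpos n).ne') (hden n)]
      simp only [inv_pow]
      field_simp
      try ring
    rw [funext heq]
    have hnum : Tendsto (fun n : ℕ => A - E * ((n : ℝ) * (j⁻¹) ^ n) - c2 * (j⁻¹) ^ n)
        atTop (nhds A) := by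
      have := ((tendsto_const_nhds (x := A)).sub
        ((tendsto_const_nhds (x := E)).mul hnρn)).sub ((tendsto_const_nhds (x := c2)).mul hρn)
      simpa using this
    simpa [Pi.div_def] using hnum.div hdenlim hD0.ne'
  have ht2 : Tendsto t2 atTop (nhds α) := by
    have heq : ∀ n : ℕ, t2 n = ((j - (j⁻¹) ^ n) / (j - 1)) / (D - E * (j⁻¹) ^ n) := by
      intro n
      have hjn : (0:ℝ) < j ^ n := pow_pos hj0 n
      rw [ht2def]
      simp only
      rw [hVeq n, div_eq_div_iff (by rw [← hVeq n]; exact (hVpos n).ne') (hden n),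
        pow_succ]
      simp only [inv_pow]
      field_simp
      try ring
    rw [funext heq, hα_eq]
    have hnum : Tendsto (fun n : ℕ => (j - (j⁻¹) ^ n) / (j - 1)) atTop
        (nhds (j / (j - 1))) := by
      have := ((tendsto_const_nhds (x := j)).sub hρn).div
        (tendsto_const_nhds (x := j - 1)) hjm1.ne'
      simpa [Pi.div_def] using this
    have := hnum.div hdenlim hD0.ne'
    rw [show j / ((j - 1) * D) = (j / (j - 1)) / D by rw [div_div]]
    exact this
  have ht3 : Tendsto t3 atTop (nhds (1 - α)) := by
    have heq : ∀ n : ℕ, t3 n = w0 / (D - E * (j⁻¹) ^ n) := by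
      intro n
      have hjn : (0:ℝ) < j ^ n := pow_pos hj0 n
      rw [ht3def]
      simp only
      rw [hVeq n, div_eq_div_iff (by rw [← hVeq n]; exact (hVpos n).ne') (hden n)]
      simp only [inv_pow]
      field_simp
      try ring
    rw [funext heq, h1α]
    exact (tendsto_const_nhds (x := w0)).div hdenlim hD0.ne'
  have ht4 : Tendsto t4 atTop (nhds 0) := by
    have heq : ∀ n : ℕ, t4 n = -((j⁻¹) ^ n / (4 * (D - E * (j⁻¹) ^ n))) := by
      intro n
      have hjn : (0:ℝ) < j ^ n := pow_pos hj0 n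
      rw [ht4def]
      simp only
      rw [hVeq n, neg_inj, div_eq_div_iff
        (by rw [← hVeq n]; exact (mul_pos (by norm_num : (0:ℝ) < 4) (hVpos n)).ne')
        (by have h1 : (j⁻¹)^n ≤ 1 := pow_le_one₀ hρ0 hρ1.le
            have h2 : 0 < D - E * (j⁻¹) ^ n := by rw [hDdef]; nlinarith
            exact (mul_pos (by norm_num : (0:ℝ) < 4) h2).ne')]
      simp only [inv_pow]
      field_simp
      try ring
    rw [funext heq]
    have := (hρn.div ((tendsto_const_nhds (x := (4:ℝ))).mul hdenlim)
      (by positivity)).neg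
    simpa [Pi.div_def] using this
  -- assemble the limit
  have hrlim : Tendsto (fun n => G ^ t1 n * K ^ t2 n * Mr ^ t3 n * sr ^ t4 n) atTop
      (nhds (G ^ (A / D) * K ^ α * Mr ^ (1 - α) * sr ^ (0:ℝ))) := by
    have f1 : Tendsto (fun n => G ^ t1 n) atTop (nhds (G ^ (A / D))) :=
      ((Real.continuousAt_const_rpow hG0.ne').tendsto).comp ht1
    have f2 : Tendsto (fun n => K ^ t2 n) atTop (nhds (K ^ α)) :=
      ((Real.continuousAt_const_rpow hK.ne').tendsto).comp ht2
    have f3 : Tendsto (fun n => Mr ^ t3 n) atTop (nhds (Mr ^ (1 - α))) :=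
      ((Real.continuousAt_const_rpow hMr0.ne').tendsto).comp ht3
    have f4 : Tendsto (fun n => sr ^ t4 n) atTop (nhds (sr ^ (0:ℝ))) :=
      ((Real.continuousAt_const_rpow hsr0.ne').tendsto).comp ht4
    exact ((f1.mul f2).mul f3).mul f4
  have hfinal : c ≤ ENNReal.ofReal (G ^ (A / D) * K ^ α * Mr ^ (1 - α) * sr ^ (0:ℝ)) :=
    ge_of_tendsto' (ENNReal.tendsto_ofReal hrlim) cr
  rw [Real.rpow_zero, mul_one] at hfinal
  have hrhs : ENNReal.ofReal (G ^ (A / D) * K ^ α * Mr ^ (1 - α))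
      = ENNReal.ofReal (G ^ (A / D)) * ENNReal.ofReal K ^ α * Mh ^ (1 - α) := by
    rw [ENNReal.ofReal_mul (by positivity), ENNReal.ofReal_mul (by positivity),
      ← ENNReal.ofReal_rpow_of_pos hK, ← ENNReal.ofReal_rpow_of_pos hMr0, ← hMr]
  rw [hrhs] at hfinal
  exact absurd hfinal (not_le.mpr hc1)
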